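/- Let ρ: [0,∞) → ℝ satisfy −ρ ∈ 𝒫 and ∫₀¹ ds/(−ρ(s)) = ∞, and set F̃(q) := ∫₁^q ds/(−ρ(s)) for q > 0, a strictly increasing continuous bijection from (0,∞) onto (−∞, M̃) with M̃ := lim_{q→∞} F̃(q) ∈ (0,∞]. Let θ, δ > 0 and tᵢ < t_{i+1} be reals with t_{i+1} − tᵢ ≤ θ. Let w: [tᵢ, t_{i+1}) → (0,∞) be continuous with D⁺w(t) ≤ −ρ(w(t)) for all t ∈ [tᵢ, t_{i+1}). Define z(t) := F̃⁻¹( F̃(w(t)) − ((t − tᵢ)/(t_{i+1} − tᵢ))(θ + δ) ). Then D⁺z(t) ≤ −(δ/θ)·(−ρ)(z(t)) for all t ∈ [tᵢ, t_{i+1}); in particular z is strictly decreasing at rate given by the class-𝒫 function s ↦ (δ/θ)(−ρ(s)). -/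

import Mathlib

open Filter Topology Set MeasureTheory

noncomputable section

/-- Class 𝒦: continuous, strictly increasing on `[0,∞)`, vanishing at `0`. -/
def ClassK (γ : ℝ → ℝ) : Prop :=
  ContinuousOn γ (Set.Ici 0) ∧ StrictMonoOn γ (Set.Ici 0) ∧ γ 0 = 0

/-- Class 𝒦∞: class 𝒦 and unbounded. -/
def ClassKInf (γ : ℝ → ℝ) : Prop :=
  ClassK γ ∧ Filter.Tendsto γ Filter.atTop Filter.atTop

/-- Class 𝒦ℒ. -/
def ClassKL (β : ℝ → ℝ → ℝ) : Prop :=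
  (∀ s, 0 ≤ s → ClassK (fun r => β r s)) ∧
  (∀ r, 0 ≤ r → AntitoneOn (fun s => β r s) (Set.Ici 0) ∧
    Filter.Tendsto (fun s => β r s) Filter.atTop (nhds 0))

/-- Class 𝒫: continuous, positive definite. -/
def ClassP (φ : ℝ → ℝ) : Prop :=
  ContinuousOn φ (Set.Ici 0) ∧ φ 0 = 0 ∧ ∀ r, 0 < r → 0 < φ r

/-- Upper right Dini derivative `D⁺v(t) = limsup_{s→0⁺} (v(t+s) − v(t))/s`, valued in `EReal`. -/
def DiniUpper (v : ℝ → ℝ) (t : ℝ) : EReal :=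
  Filter.limsup (fun s => (((v (t + s) - v t) / s : ℝ) : EReal)) (nhdsWithin 0 (Set.Ioi 0))

/-- Impulse time sequence with initial time `t₀ = τ 0`: strictly increasing and tending to `∞`;
the impulse times are `τ i` for `i ≥ 1`. -/
def IsImpulseSeq (t₀ : ℝ) (τ : ℕ → ℝ) : Prop :=
  τ 0 = t₀ ∧ StrictMono τ ∧ Filter.Tendsto τ Filter.atTop Filter.atTop

/-- The set `S = {tᵢ : i ≥ 1}` of impulse times. -/
def impulseSet (τ : ℕ → ℝ) : Set ℝ := {s | ∃ i : ℕ, 1 ≤ i ∧ τ i = s}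

/-- Impulsive-regular function on `[t₀,∞)`: right-continuous everywhere, continuous (within
`[t₀,∞)`) at every non-impulse time, and left limits exist at every impulse time. -/
def ImpulsiveRegular (t₀ : ℝ) (τ : ℕ → ℝ) (v : ℝ → ℝ) : Prop :=
  (∀ t, t₀ ≤ t → ContinuousWithinAt v (Set.Ici t) t) ∧
  (∀ t, t₀ ≤ t → t ∉ impulseSet τ → ContinuousWithinAt v (Set.Ici t₀) t) ∧
  (∀ i : ℕ, 1 ≤ i → ∃ L : ℝ, Filter.Tendsto v (nhdsWithin (τ i) (Set.Iio (τ i))) (nhds L))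

lemma nu_contOn {ρ : ℝ → ℝ} (hρ : ClassP (fun s => -ρ s)) :
    ContinuousOn (fun s => (-ρ s)⁻¹) (Set.Ioi 0) := by
  refine ContinuousOn.inv₀ (hρ.1.mono fun x hx => Set.mem_Ici.2 (le_of_lt hx)) ?_
  intro x hx; exact (hρ.2.2 x hx).ne'

lemma ftil_deriv {ρ : ℝ → ℝ} (hρ : ClassP (fun s => -ρ s))
    {Ftil : ℝ → ℝ} (hFtil : ∀ q, Ftil q = ∫ s in (1:ℝ)..q, (-ρ s)⁻¹)
    {q : ℝ} (hq : 0 < q) : HasDerivAt Ftil ((-ρ q)⁻¹) q := by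
  have hF : Ftil = fun q => ∫ s in (1:ℝ)..q, (-ρ s)⁻¹ := funext hFtil
  rw [hF]
  have hsub : uIcc (1:ℝ) q ⊆ Set.Ioi 0 := by
    intro x hx
    have := hx.1
    have h1 : min 1 q ≤ x := hx.1
    have : (0:ℝ) < min 1 q := lt_min one_pos hq
    exact lt_of_lt_of_le this h1
  refine intervalIntegral.integral_hasDerivAt_right
    (((nu_contOn hρ).mono hsub).intervalIntegrable) ?_ ?_
  · exact (nu_contOn hρ).stronglyMeasurableAtFilter isOpen_Ioi q hq
  · exact (nu_contOn hρ).continuousAt (isOpen_Ioi.mem_nhds hq)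

lemma ftil_mono {ρ : ℝ → ℝ} (hρ : ClassP (fun s => -ρ s))
    {Ftil : ℝ → ℝ} (hFtil : ∀ q, Ftil q = ∫ s in (1:ℝ)..q, (-ρ s)⁻¹) :
    StrictMonoOn Ftil (Set.Ioi 0) := by
  refine strictMonoOn_of_deriv_pos (convex_Ioi 0) ?_ ?_
  · exact fun x hx => ((ftil_deriv hρ hFtil hx).continuousAt).continuousWithinAt
  · intro x hx
    rw [interior_Ioi] at hx
    rw [(ftil_deriv hρ hFtil hx).deriv]
    exact inv_pos.2 (hρ.2.2 x hx)

lemma ftil_atBot {ρ : ℝ → ℝ} (hρ : ClassP (fun s => -ρ s))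
    (hdiv : ∫⁻ s in Set.Ioc (0:ℝ) 1, ENNReal.ofReal ((-ρ s)⁻¹) = ⊤)
    {Ftil : ℝ → ℝ} (hFtil : ∀ q, Ftil q = ∫ s in (1:ℝ)..q, (-ρ s)⁻¹) :
    ∀ M : ℝ, ∃ a : ℝ, 0 < a ∧ a < 1 ∧ Ftil a < M := by
  intro M
  set g : ℝ → ENNReal := fun s => ENNReal.ofReal ((-ρ s)⁻¹) with hg
  set f : ℕ → ℝ → ENNReal := fun n => (Set.Ioc (((n:ℝ)+2)⁻¹) 1).indicator g with hf
  have hsetsub : ∀ n : ℕ, Set.Ioc (((n:ℝ)+2)⁻¹) 1 ⊆ Set.Ioi (0:ℝ) := by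
    intro n x hx
    have : (0:ℝ) < ((n:ℝ)+2)⁻¹ := by positivity
    exact lt_trans this hx.1
  have haem : ∀ n : ℕ, AEMeasurable (f n) volume := by
    intro n
    rw [hf]
    refine (aemeasurable_indicator_iff measurableSet_Ioc).2 ?_
    refine (ENNReal.measurable_ofReal.comp_aemeasurable ?_)
    exact ((nu_contOn hρ).mono (hsetsub n)).aemeasurable measurableSet_Ioc
  have hmono : ∀ x : ℝ, Monotone fun n => f n x := by
    intro x n m hnm
    refine Set.indicator_le_indicator_of_subset (Set.Ioc_subset_Ioc_left ?_) (fun a => zero_le) x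
    apply inv_anti₀ (by positivity)
    have : (n:ℝ) ≤ m := Nat.cast_le.2 hnm
    linarith
  have hsup : ∀ x : ℝ, (⨆ n, f n x) = (Set.Ioc (0:ℝ) 1).indicator g x := by
    intro x
    apply le_antisymm
    · refine iSup_le fun n => Set.indicator_le_indicator_of_subset (hsetsub n |> fun h => ?_) (fun a => zero_le) x
      intro y hy; exact ⟨hsetsub n hy, hy.2⟩
    · by_cases hx : x ∈ Set.Ioc (0:ℝ) 1
      · rw [Set.indicator_of_mem hx]
        obtain ⟨n, hn⟩ := exists_nat_gt x⁻¹
        have hxn : x ∈ Set.Ioc (((n:ℝ)+2)⁻¹) 1 := by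
          refine ⟨inv_lt_of_inv_lt₀ hx.1 ?_, hx.2⟩
          have : (0:ℝ) ≤ (n:ℝ) := Nat.cast_nonneg n
          linarith
        calc g x = f n x := by rw [hf]; simp [Set.indicator_of_mem hxn]
          _ ≤ ⨆ n, f n x := le_iSup (fun n => f n x) n
      · rw [Set.indicator_of_notMem hx]; exact zero_le
  have hls : (⨆ n, ∫⁻ x, f n x) = ⊤ := by
    rw [← lintegral_iSup' haem (ae_of_all _ hmono)]
    calc ∫⁻ x, ⨆ n, f n x = ∫⁻ x, (Set.Ioc (0:ℝ) 1).indicator g x := by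
          congr 1; exact funext hsup
      _ = ∫⁻ x in Set.Ioc (0:ℝ) 1, g x := lintegral_indicator measurableSet_Ioc g
      _ = ⊤ := hdiv
  have : ENNReal.ofReal (|M|+1) < ⨆ n, ∫⁻ x, f n x := by
    rw [hls]; exact ENNReal.ofReal_lt_top.trans_le le_top
  obtain ⟨n, hn⟩ := lt_iSup_iff.1 this
  set a : ℝ := ((n:ℝ)+2)⁻¹ with ha
  have hapos : 0 < a := by positivity
  have ha1 : a < 1 := by
    rw [ha, inv_lt_one_iff₀]; right; push_cast; linarith [Nat.cast_nonneg (α := ℝ) n]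
  have hint : IntegrableOn (fun s => (-ρ s)⁻¹) (Set.Ioc a 1) volume := by
    have := ((nu_contOn hρ).mono (show uIcc a 1 ⊆ Set.Ioi 0 by
      rw [uIcc_of_le ha1.le]; intro x hx; exact lt_of_lt_of_le hapos hx.1)).intervalIntegrable (μ := volume)
    exact this.1
  have hnn : 0 ≤ᶠ[ae (volume.restrict (Set.Ioc a 1))] fun s => (-ρ s)⁻¹ := by
    refine (ae_restrict_iff' measurableSet_Ioc).2 (ae_of_all _ fun x hx => ?_)
    exact inv_nonneg.2 (hρ.2.2 x (lt_trans hapos hx.1)).le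
  have heq : ENNReal.ofReal (∫ s in Set.Ioc a 1, (-ρ s)⁻¹) = ∫⁻ x, f n x := by
    rw [ofReal_integral_eq_lintegral_ofReal hint hnn, hf]
    rw [lintegral_indicator measurableSet_Ioc]
  have hIlt : |M|+1 < ∫ s in Set.Ioc a 1, (-ρ s)⁻¹ := by
    rw [← ENNReal.ofReal_lt_ofReal_iff_of_nonneg (by positivity), heq]
    exact hn
  refine ⟨a, hapos, ha1, ?_⟩
  have : Ftil a = -∫ s in Set.Ioc a 1, (-ρ s)⁻¹ := by
    rw [hFtil a, intervalIntegral.integral_symm a 1, intervalIntegral.integral_of_le ha1.le]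
  rw [this]
  have : -|M| ≤ M := neg_abs_le M
  linarith

lemma z_repr {ρ : ℝ → ℝ} (hρ : ClassP (fun s => -ρ s))
    (hdiv : ∫⁻ s in Set.Ioc (0:ℝ) 1, ENNReal.ofReal ((-ρ s)⁻¹) = ⊤)
    {Ftil Finv : ℝ → ℝ}
    (hFtil : ∀ q, Ftil q = ∫ s in (1:ℝ)..q, (-ρ s)⁻¹)
    (hFinv : ∀ q, 0 < q → Finv (Ftil q) = q)
    {b u : ℝ} (hb : 0 < b) (hub : u ≤ Ftil b) :
    0 < Finv u ∧ Ftil (Finv u) = u := by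
  obtain ⟨a₀, ha₀, _, hFa₀⟩ := ftil_atBot hρ hdiv hFtil u
  have hmono := ftil_mono hρ hFtil
  have ha₀b : a₀ < b := by
    by_contra h
    push_neg at h
    have := hmono.monotoneOn (Set.mem_Ioi.2 hb) (Set.mem_Ioi.2 ha₀) h
    linarith
  have hcont : ContinuousOn Ftil (Set.Icc a₀ b) := by
    intro x hx
    exact ((ftil_deriv hρ hFtil (lt_of_lt_of_le ha₀ hx.1)).continuousAt).continuousWithinAt
  have := intermediate_value_Icc ha₀b.le hcont
  obtain ⟨q, hqmem, hq⟩ := this ⟨hFa₀.le, hub⟩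
  have hqpos : 0 < q := lt_of_lt_of_le ha₀ hqmem.1
  rw [← hq, hFinv q hqpos]
  exact ⟨hqpos, rfl⟩


set_option maxHeartbeats 1000000

/-- flow estimate for unstable flows and stable jumps: the rescaled value
`z(t) = F̃⁻¹(F̃(w(t)) − ((t − tᵢ)/(t_{i+1} − tᵢ))(θ + δ))` of a value `w` growing at rate at
most `−ρ` (with `−ρ ∈ 𝒫`) satisfies `D⁺z ≤ −(δ/θ)(−ρ)(z)`, i.e. decays at the class-𝒫 rate
`s ↦ (δ/θ)(−ρ(s))`. -/
theorem flowEstimateUnstableFlow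
    (ρ : ℝ → ℝ) (hρ : ClassP (fun s => -ρ s))
    (hdiv : ∫⁻ s in Set.Ioc (0:ℝ) 1, ENNReal.ofReal ((-ρ s)⁻¹) = ⊤)
    (Ftil Finv : ℝ → ℝ)
    (hFtil : ∀ q, Ftil q = ∫ s in (1:ℝ)..q, (-ρ s)⁻¹)
    (hFinv : ∀ q, 0 < q → Finv (Ftil q) = q)
    (θ δ : ℝ) (hθ : 0 < θ) (hδ : 0 < δ)
    (ti tip : ℝ) (hlt : ti < tip) (hθdwell : tip - ti ≤ θ)
    (w : ℝ → ℝ)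
    (hwpos : ∀ t ∈ Set.Ico ti tip, 0 < w t)
    (hwcont : ContinuousOn w (Set.Ico ti tip))
    (hwdini : ∀ t ∈ Set.Ico ti tip, DiniUpper w t ≤ (((-ρ (w t)) : ℝ) : EReal))
    (z : ℝ → ℝ)
    (hz : ∀ t, z t = Finv (Ftil (w t) - ((t - ti) / (tip - ti)) * (θ + δ))) :
    (∀ t ∈ Set.Ico ti tip,
      DiniUpper z t ≤ (((-(δ / θ * (-ρ (z t)))) : ℝ) : EReal)) ∧
    ClassP (fun s => δ / θ * (-ρ s)) := by
  have hL : 0 < tip - ti := by linarith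
  have hmono := ftil_mono hρ hFtil
  -- the rescaling facts for z
  have hzfact : ∀ t ∈ Set.Ico ti tip,
      0 < z t ∧ Ftil (z t) = Ftil (w t) - ((t - ti) / (tip - ti)) * (θ + δ) := by
    intro t ht
    have hb := hwpos t ht
    have hub : Ftil (w t) - ((t - ti) / (tip - ti)) * (θ + δ) ≤ Ftil (w t) := by
      have h1 : 0 ≤ (t - ti) / (tip - ti) := div_nonneg (by linarith [ht.1]) hL.le
      nlinarith
    have := z_repr hρ hdiv hFtil hFinv hb hub
    rw [hz t]
    exact this
  constructor
  · intro t ht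
    set k : ℝ := (θ + δ) / (tip - ti) with hk
    set b : ℝ := w t with hbdef
    set m : ℝ := -ρ b with hmdef
    have hb : 0 < b := hwpos t ht
    have hm : 0 < m := hρ.2.2 b hb
    obtain ⟨hapos, hFa⟩ := hzfact t ht
    set a : ℝ := z t with hadef
    set r : ℝ := -ρ a with hrdef
    have hr : 0 < r := hρ.2.2 a hapos
    have hk1 : 1 + δ/θ ≤ k := by
      rw [hk, le_div_iff₀ hL]
      have h2 : (1+δ/θ)*θ = θ+δ := by field_simp
      nlinarith [div_pos hδ hθ]
    -- key eventual bound, for every ε > 0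
    have key : ∀ ε : ℝ, 0 < ε → DiniUpper z t ≤ (((-(δ / θ * r) + ε : ℝ)) : EReal) := by
      intro ε hε
      set ε₂ : ℝ := ε / (2*r) with hε₂
      have hε₂pos : 0 < ε₂ := by positivity
      set ε₁ : ℝ := (ε / (2*r)) / (m⁻¹ + 1) with hε₁
      have hε₁pos : 0 < ε₁ := by positivity
      set lam : ℝ := (1 - k) * r with hlam
      set h : ℝ := lam + ε with hh
      -- eventual facts in 𝓝[>] 0
      have E0 : ∀ᶠ s in 𝓝[>] (0:ℝ), 0 < s :=
        eventually_mem_nhdsWithin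
      have E1 : ∀ᶠ s in 𝓝[>] (0:ℝ), t + s < tip := by
        have : ∀ᶠ s in 𝓝 (0:ℝ), s < tip - t :=
          eventually_lt_nhds (by linarith [ht.2])
        exact (this.filter_mono nhdsWithin_le_nhds).mono fun s hs => by linarith
      have E2 : ∀ᶠ s in 𝓝[>] (0:ℝ), (w (t+s) - b)/s < m + ε₁ := by
        have hlt2 : DiniUpper w t < ((m + ε₁ : ℝ) : EReal) := by
          refine lt_of_le_of_lt (hwdini t ht) ?_
          exact_mod_cast EReal.coe_lt_coe_iff.2 (by linarith)
        have := eventually_lt_of_limsup_lt hlt2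
        refine this.mono fun s hs => ?_
        exact_mod_cast hs
      have E3 : ∀ᶠ s in 𝓝[>] (0:ℝ), 0 < b + (m + ε₁) * s := by
        have htd : Tendsto (fun s : ℝ => b + (m + ε₁) * s) (𝓝 0) (𝓝 b) := by
          have : Tendsto (fun s : ℝ => b + (m + ε₁) * s) (𝓝 0) (𝓝 (b + (m+ε₁)*0)) :=
            (continuous_const.add (continuous_const.mul continuous_id)).tendsto 0
          simpa using this
        exact ((htd.eventually (eventually_gt_nhds hb)).filter_mono nhdsWithin_le_nhds)
      have E4 : ∀ᶠ s in 𝓝[>] (0:ℝ), 0 < a + h * s := by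
        have htd : Tendsto (fun s : ℝ => a + h * s) (𝓝 0) (𝓝 a) := by
          have : Tendsto (fun s : ℝ => a + h * s) (𝓝 0) (𝓝 (a + h*0)) :=
            (continuous_const.add (continuous_const.mul continuous_id)).tendsto 0
          simpa using this
        exact ((htd.eventually (eventually_gt_nhds hapos)).filter_mono nhdsWithin_le_nhds)
      -- slope bounds from differentiability
      have hda : HasDerivAt (fun s : ℝ => Ftil (b + (m + ε₁) * s)) ((-ρ b)⁻¹ * (m + ε₁)) 0 := by
        have h1 : HasDerivAt (fun s : ℝ => b + (m + ε₁) * s) (m + ε₁) 0 := by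
          simpa using ((hasDerivAt_id (0:ℝ)).const_mul (m + ε₁)).const_add b
        have h2 : HasDerivAt Ftil ((-ρ b)⁻¹) (b + (m + ε₁) * 0) := by
          simpa using ftil_deriv hρ hFtil hb
        exact h2.comp 0 h1
      have hdb : HasDerivAt (fun s : ℝ => Ftil (a + h * s)) ((-ρ a)⁻¹ * h) 0 := by
        have h1 : HasDerivAt (fun s : ℝ => a + h * s) h 0 := by
          simpa using ((hasDerivAt_id (0:ℝ)).const_mul h).const_add a
        have h2 : HasDerivAt Ftil ((-ρ a)⁻¹) (a + h * 0) := by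
          simpa using ftil_deriv hρ hFtil hapos
        exact h2.comp 0 h1
      have E5 : ∀ᶠ s in 𝓝[>] (0:ℝ),
          (Ftil (b + (m + ε₁) * s) - Ftil b) / s < (m + ε₁)/m + ε₁ := by
        have := (hasDerivAt_iff_tendsto_slope.1 hda).mono_left
          (nhdsWithin_mono 0 fun x (hx : x ∈ Set.Ioi (0:ℝ)) => ne_of_gt hx)
        have hlim : (-ρ b)⁻¹ * (m + ε₁) < (m + ε₁)/m + ε₁ := by
          rw [← hmdef]
          have : m⁻¹ * (m + ε₁) = (m + ε₁)/m := by field_simp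
          rw [this]
          linarith
        have hev := this.eventually (eventually_lt_nhds hlim)
        refine hev.mono fun s hs => ?_
        have heq : slope (fun s : ℝ => Ftil (b + (m + ε₁) * s)) 0 s
            = (Ftil (b + (m + ε₁) * s) - Ftil b) / s := by
          rw [slope_def_field]; norm_num
        rwa [heq] at hs
      have E6 : ∀ᶠ s in 𝓝[>] (0:ℝ),
          h/r - ε₂ < (Ftil (a + h * s) - Ftil a) / s := by
        have hsl := (hasDerivAt_iff_tendsto_slope.1 hdb).mono_left
          (nhdsWithin_mono 0 fun x (hx : x ∈ Set.Ioi (0:ℝ)) => ne_of_gt hx)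
        have hlim : h/r - ε₂ < (-ρ a)⁻¹ * h := by
          rw [← hrdef]
          have hrr : r⁻¹ * h = h/r := by field_simp
          rw [hrr]; linarith
        have hev := hsl.eventually (eventually_gt_nhds hlim)
        refine hev.mono fun s hs => ?_
        have heq : slope (fun s : ℝ => Ftil (a + h * s)) 0 s
            = (Ftil (a + h * s) - Ftil a) / s := by
          rw [slope_def_field]; norm_num
        rwa [heq] at hs
      -- combine
      have hevent : ∀ᶠ s in 𝓝[>] (0:ℝ), (z (t+s) - z t)/s ≤ -(δ / θ * r) + ε := by
        filter_upwards [E0, E1, E2, E3, E4, E5, E6] with s hs0 hs1 hs2 hs3 hs4 hs5 hs6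
        have hts : t + s ∈ Set.Ico ti tip := ⟨by linarith [ht.1], hs1⟩
        obtain ⟨hz2pos, hFz2⟩ := hzfact (t+s) hts
        have hwts : w (t+s) < b + (m+ε₁)*s := by
          have := (div_lt_iff₀ hs0).1 hs2
          linarith
        have hwtspos : 0 < w (t+s) := hwpos _ hts
        have hFw : Ftil (w (t+s)) ≤ Ftil (b + (m+ε₁)*s) :=
          (hmono (Set.mem_Ioi.2 hwtspos) (Set.mem_Ioi.2 hs3) hwts).le
        have hclin : ((t+s) - ti)/(tip - ti)*(θ+δ)
            = (t - ti)/(tip - ti)*(θ+δ) + k*s := by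
          rw [hk]; field_simp; ring
        rw [hclin] at hFz2
        have h5' : Ftil (b+(m+ε₁)*s) < Ftil b + ((m+ε₁)/m + ε₁)*s := by
          have := (div_lt_iff₀ hs0).1 hs5
          linarith
        have h6' : Ftil a + (h/r - ε₂)*s < Ftil (a+h*s) := by
          have := (lt_div_iff₀ hs0).1 hs6
          linarith
        have hcoef : (m+ε₁)/m + ε₁ - k ≤ h/r - ε₂ := by
          have hc1 : ε₁/m + ε₁ = ε/(2*r) := by
            rw [hε₁]; field_simp
          have hc2 : (m+ε₁)/m = 1 + ε₁/m := by field_simp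
          have hc3 : h/r = (1-k) + ε/r := by
            rw [hh, hlam]; field_simp
          have hc4 : ε/(2*r) + ε/(2*r) = ε/r := by field_simp; ring
          rw [hc2, hc3, hε₂]
          linarith
        have hcoefs : ((m+ε₁)/m + ε₁ - k)*s ≤ (h/r - ε₂)*s :=
          mul_le_mul_of_nonneg_right hcoef hs0.le
        have hring : ((m+ε₁)/m + ε₁)*s - k*s = ((m+ε₁)/m + ε₁ - k)*s := by ring
        have hfinal : Ftil (z (t+s)) < Ftil (a + h*s) := by linarith
        have hzlt : z (t+s) < a + h*s := by
          by_contra hcon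
          push_neg at hcon
          have := hmono.monotoneOn (Set.mem_Ioi.2 hs4) (Set.mem_Ioi.2 hz2pos) hcon
          linarith
        have hq : (z (t+s) - z t)/s ≤ h := by
          rw [div_le_iff₀ hs0, ← hadef]
          linarith
        have hle : h ≤ -(δ / θ * r) + ε := by
          rw [hh, hlam]
          have h1k : 1 - k ≤ -(δ/θ) := by linarith
          nlinarith
        linarith
      refine Filter.limsup_le_of_le (by isBoundedDefault) ?_
      exact hevent.mono fun s hs => EReal.coe_le_coe_iff.2 hs
    -- conclude from key by density
    by_contra hcon
    push_neg at hcon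
    obtain ⟨y, hy1, hy2⟩ := EReal.exists_between_coe_real hcon
    have hyy : -(δ / θ * r) < y := EReal.coe_lt_coe_iff.1 hy1
    have := key (y - (-(δ / θ * r))) (by linarith)
    have hyeq : (-(δ / θ * r) + (y - (-(δ / θ * r))) : ℝ) = y := by ring
    rw [hyeq] at this
    exact absurd (lt_of_le_of_lt this hy2) (lt_irrefl _)
  · refine ⟨continuousOn_const.mul hρ.1, ?_, fun s hs => mul_pos (div_pos hδ hθ) (hρ.2.2 s hs)⟩
    have h0 : -ρ 0 = 0 := hρ.2.1
    simp [h0]
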